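/- Let 𝔤 be a Lie algebra over a commutative ring k and let 𝔨 and 𝔥 be Lie subalgebras such that 𝔤 = 𝔨 + 𝔥 (every element of 𝔤 is a sum of an element of 𝔨 and an element of 𝔥). Suppose R is a commutative k-algebra on which 𝔤 acts by derivations, i.e., there is a Lie algebra homomorphism δ : 𝔤 → Der_k(R), and suppose 𝔞 is an ideal of R that is stable under 𝔥, i.e., δ(X)(𝔞) ⊆ 𝔞 for all X ∈ 𝔥. Let M be a 𝔤-equivariant R-module: an R-module together with a Lie algebra homomorphism ρ : 𝔤 → End_k(M) satisfying the Leibniz rule ρ(X)(r·m) = δ(X)(r)·m + r·ρ(X)(m) for all X ∈ 𝔤, r ∈ R, m ∈ M. Let N = {m ∈ M : ρ(Y_1) ∘ ⋯ ∘ ρ(Y_r)(m) ∈ 𝔞M for every finite (possibly empty) sequence Y_1, …, Y_r of elements of 𝔨} (this is the maximal 𝔨-stable submodule of M contained in 𝔞M). Then N is 𝔤-stable: ρ(X)(N) ⊆ N for every X ∈ 𝔤. -/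

import Mathlib

/-!
Statement 5: Let `𝔤 = 𝔨 + 𝔥` be a Lie algebra over a commutative ring `k`,
acting on a commutative `k`-algebra `R` by derivations via `δ`, with an ideal
`𝔞 ⊆ R` stable under `𝔥`.  Let `M` be a `𝔤`-equivariant `R`-module via `ρ`
(satisfying the Leibniz rule).  Let `N` be the maximal `𝔨`-stable submodule of
`𝔞M`, i.e. the set of `m ∈ M` such that `ρ(Y₁) ∘ ⋯ ∘ ρ(Y_r)(m) ∈ 𝔞M` for every
finite (possibly empty) sequence `Y₁, …, Y_r` in `𝔨`.  Then `N` is `𝔤`-stable.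
(Here `N` is described by unfolding its definition in the hypothesis `hm` and
the conclusion, using lists to encode finite sequences.)
-/

attribute [local instance 100] LieRing.ofAssociativeRing

theorem maximal_k_submodule_of_ideal_smul_is_g_stable
    (k : Type*) [CommRing k]
    (g : Type*) [LieRing g] [LieAlgebra k g]
    (K H : LieSubalgebra k g)
    (hsum : ∀ X : g, ∃ Y ∈ K, ∃ Z ∈ H, X = Y + Z)
    (R : Type*) [CommRing R] [Algebra k R]
    (δ : g →ₗ⁅k⁆ Derivation k R R)
    (a : Ideal R) (ha : ∀ X ∈ H, ∀ r ∈ a, δ X r ∈ a)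
    (M : Type*) [AddCommGroup M] [Module k M] [Module R M] [IsScalarTower k R M]
    (ρ : g →ₗ⁅k⁆ Module.End k M)
    (leibniz : ∀ (X : g) (r : R) (m : M), ρ X (r • m) = (δ X r) • m + r • (ρ X m))
    (X : g) (m : M)
    (hm : ∀ l : List g, (∀ Y ∈ l, Y ∈ K) →
      l.foldr (fun Y m' => ρ Y m') m ∈ a • (⊤ : Submodule R M)) :
    ∀ l : List g, (∀ Y ∈ l, Y ∈ K) →
      l.foldr (fun Y m' => ρ Y m') (ρ X m) ∈ a • (⊤ : Submodule R M) := by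
  have foldr_add : ∀ (l : List g) (u v : M),
      l.foldr (fun Y m' => ρ Y m') (u + v)
        = l.foldr (fun Y m' => ρ Y m') u + l.foldr (fun Y m' => ρ Y m') v := by
    intro l
    induction l with
    | nil => intro u v; rfl
    | cons Y l ih => intro u v; simp [List.foldr_cons, ih, map_add]
  have hder : ∀ Z ∈ H, ∀ m' ∈ a • (⊤ : Submodule R M),
      ρ Z m' ∈ a • (⊤ : Submodule R M) := by
    intro Z hZ m' hm'
    refine Submodule.smul_induction_on hm' ?_ ?_
    · intro r hr x _
      rw [leibniz]
      exact Submodule.add_mem _ (Submodule.smul_mem_smul (ha Z hZ r hr) trivial)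
        (Submodule.smul_mem_smul hr trivial)
    · intro x y hx hy; rw [map_add]; exact Submodule.add_mem _ hx hy
  suffices h : ∀ n : ℕ, ∀ X : g, ∀ m : M,
      (∀ l : List g, (∀ Y ∈ l, Y ∈ K) →
        l.foldr (fun Y m' => ρ Y m') m ∈ a • (⊤ : Submodule R M)) →
      ∀ l : List g, l.length = n → (∀ Y ∈ l, Y ∈ K) →
        l.foldr (fun Y m' => ρ Y m') (ρ X m) ∈ a • (⊤ : Submodule R M) by
    intro l hl; exact h l.length X m hm l rfl hl
  intro n
  induction n with
  | zero =>
    intro X m hmP l hlen hl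
    have hnil : l = [] := List.eq_nil_of_length_eq_zero hlen
    subst hnil
    obtain ⟨Y, hY, Z, hZ, rfl⟩ := hsum X
    have : (ρ (Y + Z)) m = ρ Y m + ρ Z m := by rw [map_add]; rfl
    simp only [List.foldr_nil, this]
    refine Submodule.add_mem _ ?_ (hder Z hZ m (hmP [] (by simp)))
    simpa using hmP [Y] (by simp [hY])
  | succ n ih =>
    intro X m hmP l hlen hl
    rcases List.eq_nil_or_concat l with rfl | ⟨l', Y, rfl⟩
    · simp at hlen
    · have hYK : Y ∈ K := hl Y (by simp)
      have hl' : ∀ W ∈ l', W ∈ K := fun W hW => hl W (by simp [hW])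
      have hlen' : l'.length = n := by
        simpa [List.concat_eq_append] using hlen
      rw [List.concat_eq_append, List.foldr_append]
      have key : ρ Y (ρ X m) = ρ X (ρ Y m) + ρ ⁅Y, X⁆ m := by
        have h2 : ρ ⁅Y, X⁆ m = ρ Y (ρ X m) - ρ X (ρ Y m) := by
          rw [ρ.map_lie]; rfl
        rw [h2]; abel
      simp only [List.foldr_cons, List.foldr_nil]
      rw [key, foldr_add]
      refine Submodule.add_mem _ ?_ (ih ⁅Y, X⁆ m hmP l' hlen' hl')
      refine ih X (ρ Y m) (fun l'' hl'' => ?_) l' hlen' hl'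
      have := hmP (l'' ++ [Y]) (by
        intro W hW
        rcases List.mem_append.mp hW with h | h
        · exact hl'' W h
        · simp at h; subst h; exact hYK)
      simpa [List.foldr_append] using this
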